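/- Let n ≥ 6 be an integer and let i satisfy 1 < i and i + 1 < n. Then the set of elements w of the standard family Fₙ with δ(v_{i,i+1}, w) = 1 is exactly {0, v_{i−1,i+1}, v_{i,i+2}}, where δ(v,w) := min(d(v,w), n − d(v,w)) and d is the Hamming distance. -/
import Mathlib


/-- Indicator vector of the set of labels {i, i+1, …, j−1}, coordinates labelled 1,…,n. -/
def stdVec (n i j : ℕ) : Fin n → ZMod 2 :=
  fun k => if i ≤ k.val + 1 ∧ k.val + 1 < j then 1 else 0

/-- δ(v,w) = min(d(v,w), n − d(v,w)), where d is the Hamming distance. -/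
def hdelta {n : ℕ} (v w : Fin n → ZMod 2) : ℕ :=
  min (hammingDist v w) (n - hammingDist v w)

/-- The standard family Fₙ: the zero vector together with the vectors v_{i,j}
for 1 ≤ i < j ≤ n. -/
def stdFamily (n : ℕ) : Finset (Fin n → ZMod 2) :=
  insert 0 ((((Finset.Icc 1 n) ×ˢ (Finset.Icc 1 n)).filter fun p => p.1 < p.2).image
    fun p => stdVec n p.1 p.2)

lemma stdVec_one_one (n : ℕ) : stdVec n 1 1 = 0 := by
  funext k
  show (if 1 ≤ k.val + 1 ∧ k.val + 1 < 1 then (1 : ZMod 2) else 0) = 0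
  rw [if_neg (by omega)]

lemma stdVec_ne_iff {n : ℕ} (i j a b : ℕ) (k : Fin n) :
    stdVec n i j k ≠ stdVec n a b k ↔
      ¬((i ≤ k.val + 1 ∧ k.val + 1 < j) ↔ (a ≤ k.val + 1 ∧ k.val + 1 < b)) := by
  unfold stdVec
  split_ifs with h1 h2 h2 <;>
    simp [h1, h2, (by decide : (1 : ZMod 2) ≠ 0), (by decide : (0 : ZMod 2) ≠ 1)]

lemma hd_eq (n i a b : ℕ) (hi1 : 1 ≤ i) (hi2 : i < n) (ha : 1 ≤ a) (hab : a ≤ b)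
    (hb : b ≤ n) :
    hammingDist (stdVec n i (i + 1)) (stdVec n a b) =
      if a ≤ i ∧ i < b then b - a - 1 else b - a + 1 := by
  have key : hammingDist (stdVec n i (i + 1)) (stdVec n a b) =
      ((Finset.range n).filter
        (fun m => ¬((i ≤ m + 1 ∧ m + 1 < i + 1) ↔ (a ≤ m + 1 ∧ m + 1 < b)))).card := by
    rw [hammingDist]
    rw [show (Finset.univ.filter fun k : Fin n =>
          stdVec n i (i + 1) k ≠ stdVec n a b k) =
        Finset.univ.filter (fun k : Fin n =>
          ¬((i ≤ k.val + 1 ∧ k.val + 1 < i + 1) ↔ (a ≤ k.val + 1 ∧ k.val + 1 < b))) from by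
      ext k
      simp only [Finset.mem_filter, stdVec_ne_iff]]
    rw [Finset.card_filter, Finset.card_filter,
      Fin.sum_univ_eq_sum_range
        (fun m => if ¬((i ≤ m + 1 ∧ m + 1 < i + 1) ↔ (a ≤ m + 1 ∧ m + 1 < b)) then 1 else 0)]
  rw [key]
  by_cases h : a ≤ i ∧ i < b
  · rw [if_pos h]
    rw [show ((Finset.range n).filter
        (fun m => ¬((i ≤ m + 1 ∧ m + 1 < i + 1) ↔ (a ≤ m + 1 ∧ m + 1 < b)))) =
        (Finset.Ico (a - 1) (b - 1)).erase (i - 1) from by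
      ext m
      simp only [Finset.mem_filter, Finset.mem_range, Finset.mem_erase, Finset.mem_Ico]
      omega]
    rw [Finset.card_erase_of_mem (by simp only [Finset.mem_Ico]; omega), Nat.card_Ico]
    omega
  · rw [if_neg h]
    rw [show ((Finset.range n).filter
        (fun m => ¬((i ≤ m + 1 ∧ m + 1 < i + 1) ↔ (a ≤ m + 1 ∧ m + 1 < b)))) =
        insert (i - 1) (Finset.Ico (a - 1) (b - 1)) from by
      ext m
      simp only [Finset.mem_filter, Finset.mem_range, Finset.mem_insert, Finset.mem_Ico]
      omega]
    rw [Finset.card_insert_of_notMem (by simp only [Finset.mem_Ico]; omega), Nat.card_Ico]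
    omega

theorem stmt_7 (n i : ℕ) (hn : 6 ≤ n) (hi : 1 < i) (hi' : i + 1 < n) :
    (stdFamily n).filter (fun w => hdelta (stdVec n i (i + 1)) w = 1) =
      {0, stdVec n (i - 1) (i + 1), stdVec n i (i + 2)} := by
  have hi2 : i < n := by omega
  ext w
  simp only [stdFamily, Finset.mem_filter, Finset.mem_insert, Finset.mem_image,
    Finset.mem_product, Finset.mem_Icc, Finset.mem_singleton, Prod.exists]
  constructor
  · rintro ⟨h0 | ⟨a, b, ⟨⟨⟨ha1, han⟩, hb1, hbn⟩, hab⟩, rfl⟩, hδ⟩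
    · exact Or.inl h0
    · unfold hdelta at hδ
      rw [hd_eq n i a b (by omega) hi2 ha1 (by omega) hbn] at hδ
      split_ifs at hδ with h
      · have : a = i - 1 ∧ b = i + 1 ∨ a = i ∧ b = i + 2 := by omega
        rcases this with ⟨rfl, rfl⟩ | ⟨rfl, rfl⟩
        · exact Or.inr (Or.inl rfl)
        · exact Or.inr (Or.inr rfl)
      · exfalso; omega
  · rintro (rfl | rfl | rfl)
    · refine ⟨Or.inl rfl, ?_⟩
      unfold hdelta
      rw [← stdVec_one_one n, hd_eq n i 1 1 (by omega) hi2 le_rfl le_rfl (by omega),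
        if_neg (by omega)]
      omega
    · refine ⟨Or.inr ⟨i - 1, i + 1, ⟨⟨⟨by omega, by omega⟩, by omega, by omega⟩, by omega⟩, rfl⟩, ?_⟩
      unfold hdelta
      rw [hd_eq n i (i - 1) (i + 1) (by omega) hi2 (by omega) (by omega) (by omega),
        if_pos ⟨by omega, by omega⟩]
      omega
    · refine ⟨Or.inr ⟨i, i + 2, ⟨⟨⟨by omega, by omega⟩, by omega, by omega⟩, by omega⟩, rfl⟩, ?_⟩
      unfold hdelta
      rw [hd_eq n i i (i + 2) (by omega) hi2 (by omega) (by omega) (by omega),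
        if_pos ⟨by omega, by omega⟩]
      omega
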